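/- With the setup of the previous statement, the value $\hat{y}_N = \hat{g}(x_N)$ satisfies the closed-form identity $\hat{y}_N = \hat{y}_0 + \frac{\sum_{j=1}^N a_j \int_{x_0}^{x_N} q_j(t)\, dt}{1 - \sum_{j=1}^N a_j \gamma_j}$, and more generally $\hat{y}_n = \hat{g}(x_n) = \hat{y}_0 + \sum_{j=1}^n a_j\big[\gamma_j(\hat{y}_N - \hat{y}_0) + \int_{x_0}^{x_N} q_j(t)\, dt\big]$ for $n = 1, \ldots, N$ (here $\sum_{j=1}^N a_j \gamma_j \neq 1$ since $\sum a_j = 1$ and $|\gamma_j| < 1$). -/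

import Mathlib

open Set intervalIntegral

lemma sum_Icc_one_eq_range {M : Type*} [AddCommMonoid M] (n : ℕ) (f : ℕ → M) :
    ∑ j ∈ Finset.Icc 1 n, f j = ∑ i ∈ Finset.range n, f (i + 1) := by
  rw [← Finset.Ico_add_one_right_eq_Icc, Finset.sum_Ico_eq_sum_range]
  simp [add_comm]

/-- closed-form identities for the values `ŷ n = ĝ (x n)` of the
integral `ĝ(x) = ŷ₀ + ∫_{x₀}^x g` of the FIF `g`, and `∑ a_j γ_j ≠ 1`. -/
theorem stmt_12 (N : ℕ) (hN : 1 ≤ N) (x : ℕ → ℝ)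
    (hx : ∀ i, i < N → x i < x (i + 1))
    (a b γ : ℕ → ℝ)
    (ha : ∀ n ∈ Finset.Icc 1 N, 0 < a n ∧ a n < 1)
    (hadef : ∀ n ∈ Finset.Icc 1 N, a n = (x n - x (n - 1)) / (x N - x 0))
    (hγ : ∀ n ∈ Finset.Icc 1 N, |γ n| < 1)
    (L : ℕ → ℝ → ℝ) (hL : ∀ n t, L n t = a n * t + b n)
    (hL0 : ∀ n ∈ Finset.Icc 1 N, L n (x 0) = x (n - 1))
    (hLN : ∀ n ∈ Finset.Icc 1 N, L n (x N) = x n)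
    (q : ℕ → ℝ → ℝ) (hq : ∀ n ∈ Finset.Icc 1 N, ContinuousOn (q n) (Icc (x 0) (x N)))
    (g : ℝ → ℝ) (hg : ContinuousOn g (Icc (x 0) (x N)))
    (hfe : ∀ n ∈ Finset.Icc 1 N, ∀ t ∈ Icc (x 0) (x N),
      g (L n t) = γ n * g t + q n t)
    (yhat0 : ℝ) (ghat : ℝ → ℝ)
    (hghat : ∀ t, ghat t = yhat0 + ∫ s in (x 0)..t, g s) :
    (∑ j ∈ Finset.Icc 1 N, a j * γ j) ≠ 1 ∧
    ghat (x N) = yhat0 +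
      (∑ j ∈ Finset.Icc 1 N, a j * ∫ s in (x 0)..(x N), q j s) /
        (1 - ∑ j ∈ Finset.Icc 1 N, a j * γ j) ∧
    ∀ n ∈ Finset.Icc 1 N, ghat (x n) = yhat0 +
      ∑ j ∈ Finset.Icc 1 n, a j *
        (γ j * (ghat (x N) - yhat0) + ∫ s in (x 0)..(x N), q j s) := by
  -- monotonicity
  have hmono : ∀ j, j ≤ N → ∀ i, i ≤ j → x i ≤ x j := by
    intro j
    induction j with
    | zero => intro _ i hi; obtain rfl := Nat.le_zero.mp hi; exact le_rfl
    | succ k ih =>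
      intro hk i hi
      rcases Nat.le_succ_iff.mp hi with h | rfl
      · exact le_trans (ih (by omega) i h) (le_of_lt (hx k (by omega)))
      · exact le_rfl
  have hx0N : x 0 < x N := by
    have h1 : x 0 ≤ x (N - 1) := hmono (N - 1) (by omega) 0 (by omega)
    have h2 : x (N - 1) < x N := by
      have := hx (N - 1) (by omega)
      rwa [Nat.sub_add_cancel hN] at this
    exact lt_of_le_of_lt h1 h2
  -- sum of a j is 1
  have hsuma : ∑ j ∈ Finset.Icc 1 N, a j = 1 := by
    rw [Finset.sum_congr rfl hadef, ← Finset.sum_div]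
    have htel : ∑ j ∈ Finset.Icc 1 N, (x j - x (j - 1)) = x N - x 0 := by
      rw [sum_Icc_one_eq_range]
      simpa using Finset.sum_range_sub x N
    rw [htel, div_self (by linarith)]
  -- interval integrability of g on subintervals
  have hsub : ∀ c d, c ∈ Icc (x 0) (x N) → d ∈ Icc (x 0) (x N) →
      IntervalIntegrable g MeasureTheory.volume c d := fun c d hc hd =>
    (hg.mono (uIcc_subset_Icc hc hd)).intervalIntegrable
  have hgI : IntervalIntegrable g MeasureTheory.volume (x 0) (x N) :=
    hsub _ _ (left_mem_Icc.mpr hx0N.le) (right_mem_Icc.mpr hx0N.le)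
  set G : ℝ := ∫ s in (x 0)..(x N), g s with hG
  set Q : ℕ → ℝ := fun n => ∫ s in (x 0)..(x N), q n s with hQ
  -- piece computation
  have hpiece : ∀ n ∈ Finset.Icc 1 N,
      (∫ s in (x (n - 1))..(x n), g s) = a n * (γ n * G + Q n) := by
    intro n hn
    have han := (ha n hn).1
    have h1 : (∫ t in (x 0)..(x N), g (a n * t + b n))
        = (a n)⁻¹ • ∫ s in (a n * x 0 + b n)..(a n * x N + b n), g s :=
      intervalIntegral.integral_comp_mul_add g han.ne' (b n)
    have hb0 : a n * x 0 + b n = x (n - 1) := by rw [← hL]; exact hL0 n hn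
    have hbN : a n * x N + b n = x n := by rw [← hL]; exact hLN n hn
    have h2 : (∫ t in (x 0)..(x N), g (a n * t + b n))
        = ∫ t in (x 0)..(x N), (γ n * g t + q n t) := by
      apply intervalIntegral.integral_congr
      intro t ht
      rw [uIcc_of_le hx0N.le] at ht
      show g (a n * t + b n) = γ n * g t + q n t
      rw [← hL]; exact hfe n hn t ht
    have hqI : IntervalIntegrable (q n) MeasureTheory.volume (x 0) (x N) :=
      ((hq n hn).mono (by rw [uIcc_of_le hx0N.le])).intervalIntegrable
    have h3 : (∫ t in (x 0)..(x N), (γ n * g t + q n t)) = γ n * G + Q n := by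
      rw [intervalIntegral.integral_add (hgI.const_mul (γ n)) hqI,
        intervalIntegral.integral_const_mul]
    rw [hb0, hbN] at h1
    rw [h2, h3] at h1
    rw [smul_eq_mul] at h1
    field_simp at h1
    linarith [h1]
  -- values of ghat
  have hval : ∀ n, n ≤ N → ghat (x n) = yhat0 + ∑ j ∈ Finset.Icc 1 n, a j * (γ j * G + Q j) := by
    intro n hn
    have hadj : ∑ i ∈ Finset.range n, (∫ s in (x i)..(x (i + 1)), g s)
        = ∫ s in (x 0)..(x n), g s := by
      apply intervalIntegral.sum_integral_adjacent_intervals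
      intro k hk
      exact hsub _ _ ⟨hmono k (by omega) 0 (by omega), hmono N le_rfl k (by omega)⟩
        ⟨hmono (k + 1) (by omega) 0 (by omega), hmono N le_rfl (k + 1) (by omega)⟩
    rw [hghat, ← hadj, sum_Icc_one_eq_range]
    congr 1
    apply Finset.sum_congr rfl
    intro i hi
    have hi' : i + 1 ∈ Finset.Icc 1 N := by
      simp only [Finset.mem_range] at hi
      simp only [Finset.mem_Icc]; omega
    have := hpiece (i + 1) hi'
    simpa using this
  have hvalN := hval N le_rfl
  -- decompose ∑ a j (γ j G + Q j)
  have hdec : ∀ n, (∑ j ∈ Finset.Icc 1 n, a j * (γ j * G + Q j))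
      = (∑ j ∈ Finset.Icc 1 n, a j * γ j) * G + ∑ j ∈ Finset.Icc 1 n, a j * Q j := by
    intro n
    rw [Finset.sum_mul, ← Finset.sum_add_distrib]
    apply Finset.sum_congr rfl
    intro j _
    ring
  -- S ≠ 1
  set S : ℝ := ∑ j ∈ Finset.Icc 1 N, a j * γ j with hS
  have hSlt : S < 1 := by
    calc S ≤ ∑ j ∈ Finset.Icc 1 N, a j * |γ j| := by
            apply Finset.sum_le_sum
            intro j hj
            exact mul_le_mul_of_nonneg_left (le_abs_self _) (ha j hj).1.le
      _ < ∑ j ∈ Finset.Icc 1 N, a j := by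
            apply Finset.sum_lt_sum_of_nonempty
            · exact Finset.nonempty_Icc.mpr hN
            · intro j hj
              have := (ha j hj).1
              nlinarith [hγ j hj, this]
      _ = 1 := hsuma
  have hSne : S ≠ 1 := ne_of_lt hSlt
  -- G in closed form
  have hGeq : G = (∑ j ∈ Finset.Icc 1 N, a j * Q j) / (1 - S) := by
    have h0 : ghat (x N) = yhat0 + G := by rw [hghat]
    have h1 : G = S * G + ∑ j ∈ Finset.Icc 1 N, a j * Q j := by
      have := hvalN
      rw [hdec N, h0] at this
      linarith
    rw [eq_div_iff (by linarith : (1 : ℝ) - S ≠ 0)]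
    linarith
  have h0 : ghat (x N) = yhat0 + G := by rw [hghat]
  refine ⟨hSne, by rw [h0, hGeq], ?_⟩
  intro n hn
  have hnN : n ≤ N := (Finset.mem_Icc.mp hn).2
  rw [hval n hnN]
  congr 1
  apply Finset.sum_congr rfl
  intro j _
  rw [h0]
  ring_nf
  rfl
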